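/- Let n, m be positive integers and let V₁, V₂, V₃, V₄ be fixed n×m complex matrices (playing the roles of the precoding matrices V_{i-2,i}, V_{i-1,i}, V_{i,i}, V_{i+1,i}). Let μ be a Borel probability measure on ℂ that is absolutely continuous with respect to Lebesgue measure. Suppose that when d, d' ∈ ℂⁿ are drawn with all 2n entries i.i.d. according to μ, the n×m matrix diag(d)·V₃ + diag(d')·V₂ has full column rank m almost surely. Then, when h₁, h₂, h₃, h₄ ∈ ℂⁿ are drawn with all 4n entries i.i.d. according to μ, the n×2m matrix obtained by horizontally concatenating diag(h₁)·V₂ + diag(h₂)·V₁ and diag(h₃)·V₃ + diag(h₄)·V₄ has rank at least m almost surely. -/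

import Mathlib

open MeasureTheory Matrix

noncomputable section


instance noAtoms_volume_complex : NullSingletonClass (volume : Measure ℂ) := by
  constructor
  intro a
  have hpre : Complex.measurableEquivRealProd ⁻¹' {((a.re, a.im) : ℝ × ℝ)} = {a} := by
    ext z
    simp [Prod.ext_iff, Complex.ext_iff]
  have h := Complex.volume_preserving_equiv_real_prod.measure_preimage
    (measurableSet_singleton ((a.re, a.im) : ℝ × ℝ)).nullMeasurableSet
  rw [hpre] at h
  rw [h]
  exact measure_singleton _

theorem pi_null_of_mvpoly (k : ℕ) :
    ∀ (μs : Fin k → Measure ℂ), (∀ i, IsProbabilityMeasure (μs i)) →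
    (∀ i, μs i ≪ volume) → ∀ (p : MvPolynomial (Fin k) ℂ), p ≠ 0 →
    Measure.pi μs {x | MvPolynomial.eval x p = 0} = 0 := by
  induction k with
  | zero =>
    intro μs _ _ p hp
    have : {x : Fin 0 → ℂ | MvPolynomial.eval x p = 0} = ∅ := by
      obtain ⟨c, rfl⟩ := MvPolynomial.C_surjective (Fin 0) p
      have hc : c ≠ 0 := fun h => hp (by rw [h, map_zero])
      ext x
      simpa using hc
    rw [this]; exact measure_empty
  | succ k ih =>
    intro μs hprob hac p hp
    haveI : ∀ i, IsProbabilityMeasure (μs i) := hprob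
    set q := MvPolynomial.finSuccEquiv ℂ k p with hqdef
    have hq : q ≠ 0 := by
      intro h
      exact hp ((MvPolynomial.finSuccEquiv ℂ k).injective (by rw [← hqdef, h, map_zero]))
    have hZm : MeasurableSet {x : Fin (k+1) → ℂ | MvPolynomial.eval x p = 0} :=
      (MvPolynomial.continuous_eval (p := p)).measurable (measurableSet_singleton 0)
    set ν : Measure (Fin k → ℂ) := Measure.pi fun j => μs ((0 : Fin (k+1)).succAbove j) with hν
    set e := MeasurableEquiv.piFinSuccAbove (fun _ : Fin (k+1) => ℂ) 0 with he
    have hmp := (measurePreserving_piFinSuccAbove μs 0).symm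
    have h1 := hmp.measure_preimage_equiv {x : Fin (k+1) → ℂ | MvPolynomial.eval x p = 0}
    rw [← h1]
    have hpre : ⇑e.symm ⁻¹' {x : Fin (k+1) → ℂ | MvPolynomial.eval x p = 0}
        = {y : ℂ × (Fin k → ℂ) | Polynomial.eval y.1 (q.map (MvPolynomial.eval y.2)) = 0} := by
      ext y
      have : e.symm y = Fin.cons y.1 y.2 := by
        simp [he, MeasurableEquiv.piFinSuccAbove_symm_apply, Fin.insertNth_zero']; rfl
      simp only [Set.mem_preimage, Set.mem_setOf_eq, this,
        MvPolynomial.eval_eq_eval_mv_eval', hqdef]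
    have hTm : MeasurableSet {y : ℂ × (Fin k → ℂ) |
        Polynomial.eval y.1 (q.map (MvPolynomial.eval y.2)) = 0} := by
      rw [← hpre]; exact e.symm.measurable hZm
    rw [hpre]
    rw [← Measure.prod_swap, Measure.map_apply measurable_swap hTm,
      Measure.measure_prod_null (measurable_swap hTm)]
    have hlc := ih (fun j => μs ((0 : Fin (k+1)).succAbove j)) (fun j => hprob _)
      (fun j => hac _) q.leadingCoeff (Polynomial.leadingCoeff_ne_zero.mpr hq)
    have hae : ∀ᵐ s ∂ν, MvPolynomial.eval s q.leadingCoeff ≠ 0 := by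
      rw [ae_iff]
      simpa [hν] using hlc
    filter_upwards [hae] with s hs
    have hmap : q.map (MvPolynomial.eval s) ≠ 0 := by
      intro h
      apply hs
      have h2 : Polynomial.coeff (q.map (MvPolynomial.eval s)) q.natDegree = 0 := by
        rw [h]; simp
      rw [Polynomial.coeff_map] at h2
      rw [Polynomial.leadingCoeff]
      exact h2
    have hfin : {a : ℂ | Polynomial.eval a (q.map (MvPolynomial.eval s)) = 0}.Finite := by
      simpa [Polynomial.IsRoot] using Polynomial.finite_setOf_isRoot hmap
    have : (Prod.mk s ⁻¹' (Prod.swap ⁻¹' {y : ℂ × (Fin k → ℂ) |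
        Polynomial.eval y.1 (q.map (MvPolynomial.eval y.2)) = 0}))
        = {a : ℂ | Polynomial.eval a (q.map (MvPolynomial.eval s)) = 0} := rfl
    show (μs 0) _ = 0
    rw [this]
    exact hac 0 (hfin.measure_zero volume)

theorem pi_null_of_mvpoly_prod (K n : ℕ) (μ : Measure ℂ) [IsProbabilityMeasure μ]
    (hac : μ ≪ volume) (p : MvPolynomial (Fin K × Fin n) ℂ) (hp : p ≠ 0) :
    Measure.pi (fun _ : Fin K × Fin n => μ) {x | MvPolynomial.eval x p = 0} = 0 := by
  classical
  set f : Fin (K * n) ≃ Fin K × Fin n := finProdFinEquiv.symm with hf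
  have hmp := measurePreserving_piCongrLeft (α := fun _ : Fin K × Fin n => ℂ)
    (fun _ => μ) f
  have hZm : MeasurableSet {x : Fin K × Fin n → ℂ | MvPolynomial.eval x p = 0} :=
    (MvPolynomial.continuous_eval (p := p)).measurable (measurableSet_singleton 0)
  rw [← hmp.measure_preimage hZm.nullMeasurableSet]
  have hq : MvPolynomial.rename (⇑finProdFinEquiv) p ≠ 0 := by
    intro h
    exact hp ((MvPolynomial.rename_injective _ finProdFinEquiv.injective)
      (by rw [h, map_zero]))
  have hpre : ⇑(MeasurableEquiv.piCongrLeft (fun _ : Fin K × Fin n => ℂ) f)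
      ⁻¹' {x | MvPolynomial.eval x p = 0}
      = {x : Fin (K * n) → ℂ |
          MvPolynomial.eval x (MvPolynomial.rename (⇑finProdFinEquiv) p) = 0} := by
    ext x
    simp only [Set.mem_preimage, Set.mem_setOf_eq, MvPolynomial.eval_rename]
    have : (MeasurableEquiv.piCongrLeft (fun _ : Fin K × Fin n => ℂ) f) x
        = fun v => x (finProdFinEquiv v) := by
      funext v
      have := MeasurableEquiv.piCongrLeft_apply_apply f (β := fun _ => ℂ) x (f.symm v)
      simpa [hf] using this
    rw [this]
    rfl
  rw [hpre]
  exact pi_null_of_mvpoly (K * n) (fun _ => μ) (fun _ => inferInstance) (fun _ => hac) _ hq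


/-- splitting `Fin (K+1) × Fin n` as first row block plus the rest -/
def rowSplit (K n : ℕ) : (Fin n ⊕ (Fin K × Fin n)) ≃ (Fin (K + 1) × Fin n) where
  toFun := Sum.elim (fun j => (0, j)) (fun v => (v.1.succ, v.2))
  invFun := fun v => Fin.cases (Sum.inl v.2) (fun i => Sum.inr (i, v.2)) v.1
  left_inv := by rintro (j | ⟨i, j⟩) <;> simp
  right_inv := by
    rintro ⟨i, j⟩
    refine Fin.cases ?_ (fun i' => ?_) i <;> simp

theorem curry_measurePreserving (n : ℕ) (μ : Measure ℂ) [IsProbabilityMeasure μ] :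
    ∀ K : ℕ, MeasurePreserving
      (fun (x : Fin K × Fin n → ℂ) (i : Fin K) (j : Fin n) => x (i, j))
      (Measure.pi fun _ : Fin K × Fin n => μ)
      (Measure.pi fun _ : Fin K => Measure.pi fun _ : Fin n => μ) := by
  intro K
  induction K with
  | zero =>
    constructor
    · exact measurable_pi_iff.2 fun i => i.elim0
    · refine Measure.ext fun s hs => ?_
      haveI hsub : Subsingleton (Fin 0 → Fin n → ℂ) := ⟨fun a b => funext fun i => i.elim0⟩
      rcases Set.eq_empty_or_nonempty s with rfl | ⟨a, ha⟩
      · simp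
      · have : s = Set.univ := Set.eq_univ_of_forall fun b => by rwa [Subsingleton.elim b a]
        subst this
        rw [Measure.map_apply (measurable_pi_iff.2 fun i => i.elim0) MeasurableSet.univ]
        simp
  | succ K ih =>
    set w := rowSplit K n with hw
    have h1 := (measurePreserving_piCongrLeft (α := fun _ : Fin (K+1) × Fin n => ℂ)
      (fun _ => μ) w).symm
    have h2 := measurePreserving_sumPiEquivProdPi
      (X := fun _ : Fin n ⊕ (Fin K × Fin n) => ℂ) (fun _ => μ)
    have h3 := (MeasurePreserving.id (Measure.pi fun _ : Fin n => μ)).prod ih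
    have h4 := (measurePreserving_piFinSuccAbove
      (fun _ : Fin (K + 1) => (Measure.pi fun _ : Fin n => μ)) 0).symm
    have hc := h4.comp (h3.comp (h2.comp h1))
    have heq : (⇑(MeasurableEquiv.piFinSuccAbove (fun _ : Fin (K+1) => (Fin n → ℂ)) 0).symm
          ∘ (Prod.map id (fun (x : Fin K × Fin n → ℂ) (i : Fin K) (j : Fin n) => x (i, j))
          ∘ (⇑(MeasurableEquiv.sumPiEquivProdPi (fun _ : Fin n ⊕ (Fin K × Fin n) => ℂ))
          ∘ ⇑(MeasurableEquiv.piCongrLeft (fun _ : Fin (K+1) × Fin n => ℂ) w).symm)))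
        = fun (x : Fin (K+1) × Fin n → ℂ) (i : Fin (K+1)) (j : Fin n) => x (i, j) := by
      funext x
      ext i j
      have hA : ∀ s, ((MeasurableEquiv.piCongrLeft (fun _ : Fin (K+1) × Fin n => ℂ) w).symm x) s
          = x (w s) := fun s => by
        rw [show ⇑(MeasurableEquiv.piCongrLeft (fun _ : Fin (K+1) × Fin n => ℂ) w).symm
            = ⇑(Equiv.piCongrLeft (fun _ : Fin (K+1) × Fin n => ℂ) w).symm from rfl]
        simp
      have hB : ⇑(MeasurableEquiv.sumPiEquivProdPi (fun _ : Fin n ⊕ (Fin K × Fin n) => ℂ))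
          = ⇑(Equiv.sumPiEquivProdPi (fun _ : Fin n ⊕ (Fin K × Fin n) => ℂ)) := rfl
      simp only [Function.comp_apply, MeasurableEquiv.piFinSuccAbove_symm_apply,
        Fin.insertNthEquiv_apply, hB]
      refine Fin.cases ?_ (fun i' => ?_) i
      · rw [Fin.insertNth_apply_same]
        simp only [Equiv.sumPiEquivProdPi, Equiv.coe_fn_mk, Prod.map_fst, id_eq, hA]
        rfl
      · rw [show i'.succ = (0 : Fin (K+1)).succAbove i' by simp, Fin.insertNth_apply_succAbove]
        simp only [Equiv.sumPiEquivProdPi, Equiv.coe_fn_mk, Prod.map_snd, hA]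
        rfl
    rw [heq] at hc
    exact hc

theorem nested_null (n : ℕ) (μ : Measure ℂ) [IsProbabilityMeasure μ] (hac : μ ≪ volume)
    (p : MvPolynomial (Fin 4 × Fin n) ℂ) (hp : p ≠ 0) :
    (Measure.pi fun _ : Fin 4 => Measure.pi fun _ : Fin n => μ)
      {h | MvPolynomial.eval (fun v : Fin 4 × Fin n => h v.1 v.2) p = 0} = 0 := by
  have hmp := curry_measurePreserving n μ 4
  have hme : Measurable fun (h : Fin 4 → Fin n → ℂ) (v : Fin 4 × Fin n) => h v.1 v.2 :=
    measurable_pi_iff.2 fun v => (measurable_pi_apply v.2).comp (measurable_pi_apply v.1)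
  have hZm : MeasurableSet
      {h : Fin 4 → Fin n → ℂ | MvPolynomial.eval (fun v : Fin 4 × Fin n => h v.1 v.2) p = 0} :=
    ((MvPolynomial.continuous_eval (p := p)).measurable.comp hme) (measurableSet_singleton 0)
  rw [← hmp.measure_preimage hZm.nullMeasurableSet]
  have hpre : (fun (x : Fin 4 × Fin n → ℂ) (i : Fin 4) (j : Fin n) => x (i, j)) ⁻¹'
      {h : Fin 4 → Fin n → ℂ | MvPolynomial.eval (fun v : Fin 4 × Fin n => h v.1 v.2) p = 0}
      = {x : Fin 4 × Fin n → ℂ | MvPolynomial.eval x p = 0} := rfl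
  rw [hpre]
  exact pi_null_of_mvpoly_prod 4 n μ hac p hp


/-- Lemma 2 (measure-theoretic content): if the desired-signal matrix
`diag(d) * V₃ + diag(d') * V₂` has full column rank `m` almost surely when the
`2n` diagonal entries are i.i.d. draws from a distribution `μ` absolutely
continuous w.r.t. Lebesgue measure on `ℂ`, then the concatenated interference
matrix `[diag(h₁) V₂ + diag(h₂) V₁  |  diag(h₃) V₃ + diag(h₄) V₄]`, whose `4n`
diagonal entries are i.i.d. draws from `μ`, has rank at least `m` almost surely. -/
theorem interference_rank_ge_of_signal_full_rank
    (n m : ℕ) (hn : 0 < n) (hm : 0 < m)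
    (V₁ V₂ V₃ V₄ : Matrix (Fin n) (Fin m) ℂ)
    (μ : Measure ℂ) [IsProbabilityMeasure μ] (hac : μ ≪ volume)
    (hfull : ∀ᵐ d ∂(Measure.pi fun _ : Fin 2 => Measure.pi fun _ : Fin n => μ),
      (Matrix.diagonal (d 0) * V₃ + Matrix.diagonal (d 1) * V₂).rank = m) :
    ∀ᵐ h ∂(Measure.pi fun _ : Fin 4 => Measure.pi fun _ : Fin n => μ),
      m ≤ (Matrix.fromCols
            (Matrix.diagonal (h 0) * V₂ + Matrix.diagonal (h 1) * V₁)
            (Matrix.diagonal (h 2) * V₃ + Matrix.diagonal (h 3) * V₄)).rank := by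
    classical
  haveI : (ae (Measure.pi fun _ : Fin 2 => Measure.pi fun _ : Fin n => μ)).NeBot :=
    ae_neBot.mpr (IsProbabilityMeasure.ne_zero _)
  obtain ⟨d, hd⟩ := hfull.exists
  set N₀ := Matrix.diagonal (d 0) * V₃ + Matrix.diagonal (d 1) * V₂ with hN₀def
  have hG : (N₀ᴴ * N₀).rank = m := by
    open scoped ComplexOrder in
    rw [Matrix.rank_conjTranspose_mul_self]
    exact hd
  have hGdet : (N₀ᴴ * N₀).det ≠ 0 := by
    have hrange : LinearMap.range (N₀ᴴ * N₀).mulVecLin = ⊤ := by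
      apply Submodule.eq_top_of_finrank_eq
      have h1 : Module.finrank ℂ (LinearMap.range (N₀ᴴ * N₀).mulVecLin) = (N₀ᴴ * N₀).rank := rfl
      rw [h1, hG, Module.finrank_fintype_fun_eq_card, Fintype.card_fin]
    have hsurj : Function.Surjective (N₀ᴴ * N₀).mulVec := by
      have := LinearMap.range_eq_top.mp hrange
      intro v
      obtain ⟨u, hu⟩ := this v
      exact ⟨u, by simpa [Matrix.mulVecLin_apply] using hu⟩
    exact isUnit_iff_ne_zero.mp ((Matrix.isUnit_iff_isUnit_det _).mp
      (Matrix.mulVec_surjective_iff_isUnit.mp hsurj))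
  set Pmat : Matrix (Fin m) (Fin m) (MvPolynomial (Fin 4 × Fin n) ℂ) :=
    Matrix.of (fun i j => ∑ k : Fin n, MvPolynomial.C (star (N₀ k i)) *
      (MvPolynomial.C (V₂ k j) * MvPolynomial.X ((0 : Fin 4), k)
       + MvPolynomial.C (V₁ k j) * MvPolynomial.X ((1 : Fin 4), k)
       + MvPolynomial.C (V₃ k j) * MvPolynomial.X ((2 : Fin 4), k)
       + MvPolynomial.C (V₄ k j) * MvPolynomial.X ((3 : Fin 4), k))) with hPmatdef
  set p := Pmat.det with hpdef
  have keyeval : ∀ h : Fin 4 → Fin n → ℂ,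
      MvPolynomial.eval (fun v : Fin 4 × Fin n => h v.1 v.2) p
      = (N₀ᴴ * (Matrix.diagonal (h 0) * V₂ + Matrix.diagonal (h 1) * V₁
         + Matrix.diagonal (h 2) * V₃ + Matrix.diagonal (h 3) * V₄)).det := by
    intro h
    rw [hpdef, RingHom.map_det]
    congr 1
    ext i j
    simp only [RingHom.mapMatrix_apply, Matrix.map_apply, hPmatdef, Matrix.of_apply, map_sum,
      _root_.map_mul, _root_.map_add, MvPolynomial.eval_C, MvPolynomial.eval_X]
    simp only [Matrix.mul_apply, Matrix.add_apply, Matrix.conjTranspose_apply,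
      Matrix.diagonal_apply, ite_mul, zero_mul, Finset.sum_ite_eq, Finset.mem_univ, if_true]
    refine Finset.sum_congr rfl fun k _ => by ring
  set hstar : Fin 4 → Fin n → ℂ :=
    (fun i => if i = 0 then d 1 else if i = 2 then d 0 else 0) with hstardef
  have e0 : hstar 0 = d 1 := by simp [hstardef]
  have e1 : hstar 1 = 0 := by simp [hstardef]
  have e2 : hstar 2 = d 0 := by simp [hstardef]
  have e3 : hstar 3 = 0 := by simp [hstardef]
  have hNh : Matrix.diagonal (hstar 0) * V₂ + Matrix.diagonal (hstar 1) * V₁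
      + Matrix.diagonal (hstar 2) * V₃ + Matrix.diagonal (hstar 3) * V₄ = N₀ := by
    rw [e0, e1, e2, e3, hN₀def]
    have hz : Matrix.diagonal (0 : Fin n → ℂ) = 0 := Matrix.diagonal_zero
    rw [hz]
    simp only [Matrix.zero_mul, add_zero]
    rw [add_comm]
  have hpne : p ≠ 0 := by
    intro h0
    apply hGdet
    have hkey := keyeval hstar
    rw [h0, map_zero, hNh] at hkey
    exact hkey.symm
  have hnull := nested_null n μ hac p hpne
  have hae : ∀ᵐ h ∂(Measure.pi fun _ : Fin 4 => Measure.pi fun _ : Fin n => μ),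
      MvPolynomial.eval (fun v : Fin 4 × Fin n => h v.1 v.2) p ≠ 0 := by
    rw [ae_iff]
    simpa using hnull
  filter_upwards [hae] with h hh
  rw [keyeval h] at hh
  set A := Matrix.diagonal (h 0) * V₂ + Matrix.diagonal (h 1) * V₁ with hA
  set B := Matrix.diagonal (h 2) * V₃ + Matrix.diagonal (h 3) * V₄ with hB
  have hNh2 : Matrix.diagonal (h 0) * V₂ + Matrix.diagonal (h 1) * V₁
      + Matrix.diagonal (h 2) * V₃ + Matrix.diagonal (h 3) * V₄ = A + B := by
    rw [hA, hB, add_assoc]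
  rw [hNh2] at hh
  have hrank1 : (N₀ᴴ * (A + B)).rank = m := by
    rw [Matrix.rank_of_isUnit _ ((Matrix.isUnit_iff_isUnit_det _).mpr (isUnit_iff_ne_zero.mpr hh)),
      Fintype.card_fin]
  have h2 : m ≤ (A + B).rank :=
    le_trans (le_of_eq hrank1.symm) (Matrix.rank_mul_le_right _ _)
  have h3 : A + B = (Matrix.fromCols A B : Matrix (Fin n) (Fin m ⊕ Fin m) ℂ) *
      (Matrix.fromRows (1 : Matrix (Fin m) (Fin m) ℂ) 1 : Matrix (Fin m ⊕ Fin m) (Fin m) ℂ) := by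
    rw [Matrix.fromCols_mul_fromRows]; simp
  exact h2.trans (by rw [h3]; exact Matrix.rank_mul_le_left _ _)

end
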